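/- Let ζ : C(M;ℝ) → ℝ be a functional that is monotone in the sense that min(F−G) ≤ ζ(F) − ζ(G) ≤ max(F−G), positively homogeneous (ζ(aH) = aζ(H) for a ≥ 0), and satisfies ζ(H+c) = ζ(H)+c for constants c. Let X ⊂ M be closed. Then the following are equivalent: (i) there exists H₀ ≤ 0 with {H₀ = 0} = X and ζ(H₀) = 0; (ii) for every H ≤ 0 with H|_X = 0 one has ζ(H) = 0. -/

import Mathlib

/-- For a monotone, positively homogeneous, shift-invariant functional `ζ` on
`C(M;ℝ)` and a closed set `X ⊆ M`: the existence of some `H₀ ≤ 0` with zero set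
exactly `X` and `ζ(H₀) = 0` is equivalent to `ζ(H) = 0` for every `H ≤ 0`
vanishing on `X`. -/
theorem heavy_criterion {M : Type*} [MetricSpace M] [CompactSpace M] [Nonempty M]
    (ζ : C(M, ℝ) → ℝ)
    (hmono : ∀ F G : C(M, ℝ),
      (⨅ x, (F x - G x)) ≤ ζ F - ζ G ∧ ζ F - ζ G ≤ ⨆ x, (F x - G x))
    (hhom : ∀ (a : ℝ), 0 ≤ a → ∀ H : C(M, ℝ), ζ (a • H) = a * ζ H)
    (hshift : ∀ (H : C(M, ℝ)) (c : ℝ), ζ (H + ContinuousMap.const M c) = ζ H + c)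
    (X : Set M) (hX : IsClosed X) :
    (∃ H₀ : C(M, ℝ), (∀ x, H₀ x ≤ 0) ∧ {x | H₀ x = 0} = X ∧ ζ H₀ = 0) ↔
      (∀ H : C(M, ℝ), (∀ x, H x ≤ 0) → (∀ x ∈ X, H x = 0) → ζ H = 0) := by
  have hζ0 : ζ 0 = 0 := by simpa using hhom 0 le_rfl 0
  constructor
  · rintro ⟨H₀, hneg, hset, hζH₀⟩ H hH hHX
    have hle : ζ H ≤ 0 := by
      have h := (hmono H 0).2
      have hsup : (⨆ x, (H x - (0 : C(M, ℝ)) x)) ≤ 0 :=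
        ciSup_le fun x => by simpa using hH x
      rw [hζ0] at h; linarith
    have key : ∀ ε > (0:ℝ), -ε ≤ ζ H := by
      intro ε hε
      by_cases hne : ({x | H x ≤ -ε} : Set M).Nonempty
      · have hKc : IsCompact {x | H x ≤ -ε} :=
          (isClosed_le (map_continuous H) continuous_const).isCompact
        obtain ⟨x₀, hx₀K, hx₀min⟩ := hKc.exists_isMinOn hne
          ((continuous_neg.comp (map_continuous H₀)).continuousOn)
        have hx₀X : x₀ ∉ X := by
          intro hx
          have := hHX x₀ hx
          have hx₀ : H x₀ ≤ -ε := hx₀K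
          linarith
        have hH₀x₀ : H₀ x₀ < 0 := by
          rcases lt_or_eq_of_le (hneg x₀) with h | h
          · exact h
          · exact absurd (hset ▸ h : x₀ ∈ X) hx₀X
        set δ : ℝ := -H₀ x₀ with hδdef
        have hδ : 0 < δ := by simp [hδdef]; linarith
        set a : ℝ := ‖H‖ / δ with hadef
        have ha : 0 ≤ a := div_nonneg (norm_nonneg _) hδ.le
        have hinf : (-ε : ℝ) ≤ ⨅ x, (H x - (a • H₀) x) := by
          refine le_ciInf fun x => ?_
          simp only [ContinuousMap.smul_apply, smul_eq_mul]
          by_cases hx : H x ≤ -ε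
          · have h1 : -H₀ x₀ ≤ -H₀ x := hx₀min hx
            have h2 : ‖H‖ ≤ a * (-H₀ x) := by
              have : ‖H‖ = a * δ := by rw [hadef, div_mul_cancel₀ _ hδ.ne']
              rw [this]
              exact mul_le_mul_of_nonneg_left h1 ha
            have h3 : -‖H‖ ≤ H x := by
              have h4 := ContinuousMap.norm_coe_le_norm H x
              rw [Real.norm_eq_abs] at h4
              have := abs_le.mp h4
              linarith [this.1]
            linarith
          · push_neg at hx
            have : a * H₀ x ≤ 0 := mul_nonpos_of_nonneg_of_nonpos ha (hneg x)
            linarith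
        have h := (hmono H (a • H₀)).1
        have hζa : ζ (a • H₀) = 0 := by rw [hhom a ha, hζH₀, mul_zero]
        rw [hζa] at h; linarith
      · have h := (hmono H 0).1
        have hinf : (-ε : ℝ) ≤ ⨅ x, (H x - (0 : C(M, ℝ)) x) := by
          refine le_ciInf fun x => ?_
          have : ¬ (H x ≤ -ε) := fun hx => hne ⟨x, hx⟩
          simp; linarith
        rw [hζ0] at h; linarith
    have hge : 0 ≤ ζ H := by
      by_contra h
      push_neg at h
      have := key (-(ζ H)/2) (by linarith)
      linarith
    linarith
  · intro hall
    rcases X.eq_empty_or_nonempty with hXe | hXne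
    · exfalso
      have h1 := hall (ContinuousMap.const M (-1)) (fun x => by norm_num)
        (fun x hx => by simp [hXe] at hx)
      have h2 : ζ (ContinuousMap.const M (-1)) = -1 := by
        have := hshift 0 (-1)
        rw [hζ0] at this
        simpa using this
      linarith
    · have hcont : Continuous fun x : M => -Metric.infDist x X :=
        (Metric.continuous_infDist_pt X).neg
      refine ⟨⟨fun x => -Metric.infDist x X, hcont⟩, fun x => by
        simp [Metric.infDist_nonneg], ?_, ?_⟩
      · ext x
        simp only [ContinuousMap.coe_mk, Set.mem_setOf_eq, neg_eq_zero]
        constructor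
        · intro h
          have := (Metric.mem_closure_iff_infDist_zero hXne).2 h
          rwa [hX.closure_eq] at this
        · exact Metric.infDist_zero_of_mem
      · exact hall _ (fun x => by simp [Metric.infDist_nonneg])
          (fun x hx => by simp [Metric.infDist_zero_of_mem hx])
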